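/- Let r ≥ 1 be an integer and let g : ℝ → ℝ be a 1-periodic function of class C^r. Then the composite trapezoidal rule error on the uniform mesh x_i = i/m satisfies R(m) := ∫₀¹ g(x) dx − (1/m) Σ_{i=0}^{m−1} g(x_i) = O(m^{−r}); that is, there is a constant C > 0 (depending on g and r) such that |R(m)| ≤ C m^{−r} for all m ≥ 1. -/

import Mathlib

open Set Real Complex MeasureTheory Finset


lemma geom_aux {m : ℕ} (hm : 1 ≤ m) (n : ℤ) :
    ∑ i ∈ Finset.range m, (fourier n (((i : ℝ)/(m : ℝ) : ℝ) : AddCircle (1:ℝ)))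
      = if (m : ℤ) ∣ n then (m : ℂ) else 0 := by
  have hm0 : (m : ℂ) ≠ 0 := Nat.cast_ne_zero.mpr (by omega)
  have hpi : (2 * π * I : ℂ) ≠ 0 := by
    simp [Real.pi_ne_zero, Complex.I_ne_zero]
  have hterm : ∀ i : ℕ, (fourier n (((i : ℝ)/(m : ℝ) : ℝ) : AddCircle (1:ℝ)))
      = Complex.exp (2 * π * I * n / m) ^ i := by
    intro i
    rw [fourier_coe_apply, ← Complex.exp_nat_mul]
    congr 1
    push_cast
    field_simp
  simp_rw [hterm]
  by_cases hdvd : (m : ℤ) ∣ n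
  · obtain ⟨k, hk⟩ := hdvd
    have h1 : Complex.exp (2 * π * I * n / m) = 1 := by
      rw [show (2 * π * I * n / m : ℂ) = k * (2 * π * I) by
        have : (n : ℂ) = m * k := by exact_mod_cast congrArg (Int.cast : ℤ → ℂ) hk
        rw [this]; field_simp]
      exact Complex.exp_int_mul_two_pi_mul_I k
    have hd : (m : ℤ) ∣ n := ⟨k, hk⟩
    simp [h1, hd]
  · have hne : Complex.exp (2 * π * I * n / m) ≠ 1 := by
      intro h
      rw [Complex.exp_eq_one_iff] at h
      obtain ⟨k, hk⟩ := h
      apply hdvd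
      refine ⟨k, ?_⟩
      have h2 : (n : ℂ) = m * k := by
        field_simp at hk
        have h3 : (2 * π * I : ℂ) * n = (2 * π * I) * (m * k) := by linear_combination (2 * π * I : ℂ) * hk
        exact mul_left_cancel₀ hpi h3
      exact_mod_cast h2
    rw [geom_sum_eq hne]
    have hpow : Complex.exp (2 * π * I * n / m) ^ m = 1 := by
      rw [← Complex.exp_nat_mul]
      rw [show (m : ℂ) * (2 * π * I * n / m) = n * (2 * π * I) by field_simp]
      exact Complex.exp_int_mul_two_pi_mul_I n
    simp [hpow, hdvd]


lemma periodic_iteratedDeriv {g : ℝ → ℝ} (hper : Function.Periodic g 1) (j : ℕ) :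
    Function.Periodic (iteratedDeriv j g) 1 := by
  induction j with
  | zero => simpa using hper
  | succ j ih =>
    intro x
    rw [iteratedDeriv_succ]
    have : (fun y => iteratedDeriv j g (y + 1)) = iteratedDeriv j g := funext ih
    rw [← deriv_comp_add_const (iteratedDeriv j g) 1 x, this]

lemma coeff_rec {r : ℕ} {g : ℝ → ℝ} (hper : Function.Periodic g 1) (hg : ContDiff ℝ r g)
    {j : ℕ} (hj : j < r) {n : ℤ} (hn : n ≠ 0) :
    fourierCoeffOn one_pos (fun x => ((iteratedDeriv j g x : ℝ) : ℂ)) n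
      = (1 / (2 * π * I * n)) *
        fourierCoeffOn one_pos (fun x => ((iteratedDeriv (j+1) g x : ℝ) : ℂ)) n := by
  have hder : ∀ x : ℝ, HasDerivAt (fun y => ((iteratedDeriv j g y : ℝ) : ℂ))
      (((iteratedDeriv (j+1) g x : ℝ) : ℂ)) x := by
    intro x
    have hdiff : Differentiable ℝ (iteratedDeriv j g) :=
      hg.differentiable_iteratedDeriv j (by exact_mod_cast hj)
    have h2 : HasDerivAt (iteratedDeriv j g) (iteratedDeriv (j+1) g x) x := by
      rw [iteratedDeriv_succ]; exact (hdiff x).hasDerivAt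
    exact h2.ofReal_comp
  have hcont : Continuous (iteratedDeriv (j+1) g) :=
    hg.continuous_iteratedDeriv (j+1) (by exact_mod_cast hj)
  have hint : IntervalIntegrable (fun x => ((iteratedDeriv (j+1) g x : ℝ) : ℂ)) volume 0 1 :=
    (Complex.continuous_ofReal.comp hcont).intervalIntegrable 0 1
  rw [fourierCoeffOn_of_hasDerivAt one_pos hn (fun x _ => hder x) hint]
  have hper1 : iteratedDeriv j g 1 = iteratedDeriv j g 0 := by
    simpa using (periodic_iteratedDeriv hper j 0)
  rw [hper1]
  push_cast
  ring

lemma coeff_bound {g : ℝ → ℝ} {M : ℝ}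
    (hM : ∀ x ∈ Icc (0:ℝ) 1, |g x| ≤ M) (n : ℤ) :
    ‖fourierCoeffOn one_pos (fun x => ((g x : ℝ) : ℂ)) n‖ ≤ M := by
  rw [fourierCoeffOn_eq_integral, norm_smul]
  have h1 : ‖(1 / ((1:ℝ) - 0))‖ = 1 := by norm_num
  rw [h1, one_mul]
  have := intervalIntegral.norm_integral_le_of_norm_le_const
    (a := (0:ℝ)) (b := 1) (C := M)
    (f := fun x => fourier (-n) (x : AddCircle ((1:ℝ) - 0)) • ((g x : ℝ) : ℂ)) ?_
  · simpa using this
  · intro x hx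
    rw [Set.uIoc_of_le (by norm_num : (0:ℝ) ≤ 1)] at hx
    have : ‖fourier (-n) (x : AddCircle ((1:ℝ) - 0)) • ((g x : ℝ) : ℂ)‖
        = ‖((g x : ℝ) : ℂ)‖ := by
      rw [smul_eq_mul, norm_mul, fourier_apply, Circle.norm_coe, one_mul]
    rw [this, Complex.norm_real, Real.norm_eq_abs]
    exact hM x ⟨hx.1.le, hx.2⟩

-- iterated recursion and decay
lemma coeff_decay {r : ℕ} {g : ℝ → ℝ} (hper : Function.Periodic g 1) (hg : ContDiff ℝ r g)
    {M : ℝ} (hM : ∀ x ∈ Icc (0:ℝ) 1, |iteratedDeriv r g x| ≤ M)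
    {n : ℤ} (hn : n ≠ 0) :
    ‖fourierCoeffOn one_pos (fun x => ((g x : ℝ) : ℂ)) n‖ ≤ M / |(n : ℝ)| ^ r := by
  have hnR : (1:ℝ) ≤ |(n:ℝ)| := by
    rw [← Int.cast_abs]; exact_mod_cast Int.one_le_abs (by omega)
  have hM0 : 0 ≤ M := le_trans (abs_nonneg _) (hM 0 ⟨le_rfl, zero_le_one⟩)
  have iter : ∀ j, j ≤ r →
      fourierCoeffOn one_pos (fun x => ((g x : ℝ) : ℂ)) n
        = (1 / (2 * π * I * n)) ^ j *
          fourierCoeffOn one_pos (fun x => ((iteratedDeriv j g x : ℝ) : ℂ)) n := by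
    intro j
    induction j with
    | zero => intro _; simp [iteratedDeriv_zero]
    | succ j ih =>
      intro hj
      rw [ih (by omega), coeff_rec hper hg (by omega) hn, pow_succ]
      ring
  rw [iter r le_rfl, norm_mul, norm_pow]
  have hnorm : ‖(1 / (2 * π * I * n) : ℂ)‖ = 1 / (2 * π * |(n:ℝ)|) := by
    rw [norm_div, norm_one]
    congr 1
    simp only [norm_mul, Complex.norm_ofNat, Complex.norm_real, Complex.norm_I,
      Real.norm_eq_abs, abs_of_pos Real.pi_pos]
    rw [mul_one]
    simp [Complex.norm_intCast, Int.cast_abs]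
  calc ‖(1 / (2 * π * I * n) : ℂ)‖ ^ r * ‖fourierCoeffOn one_pos
        (fun x => ((iteratedDeriv r g x : ℝ) : ℂ)) n‖
      ≤ (1 / |(n:ℝ)|) ^ r * M := by
        apply mul_le_mul _ (coeff_bound hM n) (norm_nonneg _)
          (by positivity)
        apply pow_le_pow_left₀ (norm_nonneg _)
        rw [hnorm]
        rw [div_le_div_iff₀ (by positivity) (by linarith)]
        nlinarith [Real.pi_gt_three]
      _ = M / |(n:ℝ)| ^ r := by rw [div_pow, one_pow, one_div, div_eq_mul_inv, mul_comm]

theorem fourier_case (r : ℕ) (hr : 2 ≤ r)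
    (g : ℝ → ℝ) (hper : Function.Periodic g 1) (hg : ContDiff ℝ r g) :
    ∃ C > 0, ∀ m : ℕ, 1 ≤ m →
      |(∫ x in (0:ℝ)..1, g x) - (1/(m:ℝ)) * ∑ i ∈ Finset.range m, g ((i:ℝ)/(m:ℝ))|
        ≤ C / (m:ℝ) ^ r := by
  haveI : Fact ((0:ℝ) < 1) := ⟨one_pos⟩
  set c : ℤ → ℂ := fourierCoeffOn one_pos (fun x => ((g x : ℝ) : ℂ)) with hc
  -- sup bound for r-th derivative
  obtain ⟨M, hM⟩ : ∃ M, ∀ x ∈ Icc (0:ℝ) 1, |iteratedDeriv r g x| ≤ M := by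
    obtain ⟨M, hM⟩ := isCompact_Icc.exists_bound_of_continuousOn
      ((hg.continuous_iteratedDeriv r le_rfl).continuousOn (s := Icc (0:ℝ) 1))
    exact ⟨M, fun x hx => hM x hx⟩
  have hM0 : 0 ≤ M := le_trans (abs_nonneg _) (hM 0 ⟨le_rfl, zero_le_one⟩)
  have hdecay : ∀ n : ℤ, n ≠ 0 → ‖c n‖ ≤ M / |(n:ℝ)| ^ r :=
    fun n hn => coeff_decay hper hg hM hn
  -- a cruder quadratic decay
  have hdecay2 : ∀ n : ℤ, n ≠ 0 → ‖c n‖ ≤ M * (1 / (n:ℝ) ^ 2) := by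
    intro n hn
    have hnR : (1:ℝ) ≤ |(n:ℝ)| := by
      rw [← Int.cast_abs]; exact_mod_cast Int.one_le_abs hn
    have h2 : |(n:ℝ)| ^ 2 ≤ |(n:ℝ)| ^ r := pow_le_pow_right₀ hnR hr
    calc ‖c n‖ ≤ M / |(n:ℝ)| ^ r := hdecay n hn
      _ ≤ M / |(n:ℝ)| ^ 2 := by
          apply div_le_div_of_nonneg_left hM0 (by positivity) h2 |>.trans_eq rfl
      _ = M * (1 / (n:ℝ) ^ 2) := by rw [_root_.sq_abs ((n:ℝ))]; ring
  -- summability of the Fourier coefficients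
  have hsum1 : Summable (fun n : ℤ => M * (1 / (n:ℝ) ^ 2)) :=
    (summable_one_div_int_pow.mpr one_lt_two).mul_left M
  have hsumc : Summable c := by
    apply Summable.of_norm
    apply Summable.of_norm_bounded_eventually hsum1
    have h0 : ({(0:ℤ)} : Set ℤ).Finite := Set.finite_singleton 0
    filter_upwards [h0.eventually_cofinite_notMem] with n hn
    rw [Real.norm_eq_abs, _root_.abs_of_nonneg (norm_nonneg _)]
    exact hdecay2 n (by simpa using hn)
  -- the continuous lift of g to the circle
  have hgc : Continuous g := hg.continuous
  have hg01 : ((g 0 : ℝ) : ℂ) = ((g 1 : ℝ) : ℂ) := by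
    norm_cast
    have := hper 0
    rw [zero_add] at this
    exact this.symm
  set F : C(AddCircle (1:ℝ), ℂ) :=
    ⟨AddCircle.liftIco 1 0 (fun x => ((g x : ℝ) : ℂ)),
      AddCircle.liftIco_zero_continuous hg01
        (Complex.continuous_ofReal.comp hgc).continuousOn⟩ with hF
  have hFcoe : ∀ x : ℝ, x ∈ Ico (0:ℝ) 1 → F ((x : ℝ) : AddCircle (1:ℝ)) = ((g x : ℝ) : ℂ) := by
    intro x hx
    exact AddCircle.liftIco_zero_coe_apply (p := (1:ℝ)) (f := fun x => ((g x : ℝ) : ℂ)) hx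
  have hcoef : ∀ n : ℤ, fourierCoeff (⇑F) n = c n := by
    intro n
    have := fourierCoeff_liftIco_eq (T := 1) (a := 0) (fun x => ((g x : ℝ) : ℂ)) n
    simp only [zero_add] at this
    exact this
  have hsumF : Summable (fourierCoeff (⇑F)) := by
    rw [show fourierCoeff (⇑F) = c from funext hcoef]; exact hsumc
  set K : ℝ := ∑' k : ℤ, (1 / (k:ℝ) ^ 2) with hK
  have hK0 : 0 ≤ K := tsum_nonneg (fun k => by positivity)
  refine ⟨M * K + 1, by positivity, ?_⟩
  intro m hm
  have hmR : (0:ℝ) < m := by exact_mod_cast Nat.pos_of_ne_zero (by omega)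
  have hmZ : ((m:ℤ)) ≠ 0 := Int.natCast_ne_zero.mpr (by omega)
  have hmC : (m:ℂ) ≠ 0 := Nat.cast_ne_zero.mpr (by omega)
  have hpt : ∀ i ∈ Finset.range m, HasSum
      (fun n : ℤ => fourierCoeff (⇑F) n • fourier n (((i:ℝ)/(m:ℝ) : ℝ) : AddCircle (1:ℝ)))
      (((g ((i:ℝ)/(m:ℝ)) : ℝ) : ℂ)) := by
    intro i hi
    have hx : ((i:ℝ)/(m:ℝ)) ∈ Ico (0:ℝ) 1 :=
      ⟨by positivity, by rw [div_lt_one hmR]; exact_mod_cast Finset.mem_range.mp hi⟩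
    have := has_pointwise_sum_fourier_series_of_summable hsumF
      ((((i:ℝ)/(m:ℝ)) : ℝ) : AddCircle (1:ℝ))
    rwa [hFcoe _ hx] at this
  set S : ℂ := ∑ i ∈ Finset.range m, ((g ((i:ℝ)/(m:ℝ)) : ℝ) : ℂ) with hS
  have hsum2 : HasSum (fun n : ℤ => ∑ i ∈ Finset.range m,
      fourierCoeff (⇑F) n • fourier n (((i:ℝ)/(m:ℝ) : ℝ) : AddCircle (1:ℝ))) S :=
    hasSum_sum hpt
  have hrw : (fun n : ℤ => ∑ i ∈ Finset.range m,
      fourierCoeff (⇑F) n • fourier n (((i:ℝ)/(m:ℝ) : ℝ) : AddCircle (1:ℝ)))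
      = fun n => if (m:ℤ) ∣ n then (m:ℂ) * c n else 0 := by
    funext n
    simp_rw [smul_eq_mul, ← Finset.mul_sum, hcoef n, geom_aux hm n]
    split_ifs <;> ring
  rw [hrw] at hsum2
  have hsum3 : HasSum (fun n : ℤ => if (m:ℤ) ∣ n then c n else 0) (S / m) := by
    have h := hsum2.div_const (m:ℂ)
    suffices hh : (fun n : ℤ => if (m:ℤ) ∣ n then c n else 0) = fun i => (if (m:ℤ) ∣ i then (m:ℂ) * c i else 0) / (m:ℂ) by rw [hh]; exact h
    funext n
    split_ifs with hd
    · exact (mul_div_cancel_left₀ _ hmC).symm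
    · exact (zero_div _).symm
  have hinj : Function.Injective (fun k : ℤ => k * (m:ℤ)) :=
    fun a b h => mul_right_cancel₀ hmZ h
  have hzero : ∀ x : ℤ, x ∉ Set.range (fun k : ℤ => k * (m:ℤ)) →
      (if (m:ℤ) ∣ x then c x else 0) = 0 := by
    intro x hx
    rw [if_neg]
    intro hdvd
    obtain ⟨k, hk⟩ := hdvd
    exact hx ⟨k, by simp [hk, mul_comm]⟩
  have hsum5 : HasSum (fun k : ℤ => c (k * (m:ℤ))) (S / m) := by
    have h4 := (hinj.hasSum_iff hzero).mpr hsum3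
    have he : ((fun n : ℤ => if (m:ℤ) ∣ n then c n else 0) ∘ (fun k : ℤ => k * (m:ℤ)))
        = fun k : ℤ => c (k * (m:ℤ)) := by
      funext k
      simp [Function.comp, dvd_mul_left (m:ℤ) k]
    rwa [he] at h4
  have h0 : HasSum (fun k : ℤ => if k = (0:ℤ) then c 0 else 0) (c 0) := hasSum_ite_eq 0 (c 0)
  have hsub := hsum5.sub h0
  have hsum6 : Summable (fun k : ℤ => (M/(m:ℝ)^r) * (1/(k:ℝ)^2)) :=
    (summable_one_div_int_pow.mpr one_lt_two).mul_left _
  have hDb : ∀ k : ℤ, ‖c (k * (m:ℤ)) - (if k = (0:ℤ) then c 0 else 0)‖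
      ≤ (M / (m:ℝ)^r) * (1/(k:ℝ)^2) := by
    intro k
    rcases eq_or_ne k 0 with rfl | hk
    · simp
    · rw [if_neg hk, sub_zero]
      have hk0 : ((k:ℝ)) ≠ 0 := Int.cast_ne_zero.mpr hk
      have hkm : k * (m:ℤ) ≠ 0 := mul_ne_zero hk hmZ
      have h1 : ‖c (k * (m:ℤ))‖ ≤ M / |((k * (m:ℤ) : ℤ):ℝ)| ^ r := hdecay _ hkm
      have hk1 : (1:ℝ) ≤ |(k:ℝ)| := by
        rw [← Int.cast_abs]; exact_mod_cast Int.one_le_abs hk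
      have h2 : (k:ℝ)^2 * (m:ℝ)^r ≤ |((k * (m:ℤ) : ℤ):ℝ)| ^ r := by
        push_cast
        rw [abs_mul, _root_.abs_of_nonneg hmR.le, mul_pow]
        have h3 : (k:ℝ)^2 ≤ |(k:ℝ)|^r := by
          calc (k:ℝ)^2 = |(k:ℝ)|^2 := (_root_.sq_abs _).symm
            _ ≤ |(k:ℝ)|^r := pow_le_pow_right₀ hk1 hr
        exact mul_le_mul_of_nonneg_right h3 (by positivity)
      calc ‖c (k * (m:ℤ))‖ ≤ M / |((k * (m:ℤ) : ℤ):ℝ)| ^ r := h1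
        _ ≤ M / ((k:ℝ)^2 * (m:ℝ)^r) := by
            apply div_le_div_of_nonneg_left hM0 (by positivity) h2
        _ = (M/(m:ℝ)^r) * (1/(k:ℝ)^2) := by rw [mul_one_div, div_div, mul_comm ((m:ℝ)^r)]
  have hDsum : Summable (fun k : ℤ => ‖c (k * (m:ℤ)) - (if k = (0:ℤ) then c 0 else 0)‖) :=
    Summable.of_nonneg_of_le (fun _ => norm_nonneg _) hDb hsum6
  have hvnorm : ‖S/(m:ℂ) - c 0‖ ≤ (M/(m:ℝ)^r) * K := by
    calc ‖S/(m:ℂ) - c 0‖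
        = ‖∑' k : ℤ, (c (k * (m:ℤ)) - (if k = (0:ℤ) then c 0 else 0))‖ := by rw [hsub.tsum_eq]
      _ ≤ ∑' k : ℤ, ‖c (k * (m:ℤ)) - (if k = (0:ℤ) then c 0 else 0)‖ :=
          norm_tsum_le_tsum_norm hDsum
      _ ≤ ∑' k : ℤ, (M/(m:ℝ)^r) * (1/(k:ℝ)^2) := Summable.tsum_le_tsum hDb hDsum hsum6
      _ = (M/(m:ℝ)^r) * K := by rw [tsum_mul_left]
  have hc0 : c 0 = (((∫ x in (0:ℝ)..1, g x) : ℝ) : ℂ) := by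
    rw [hc]
    rw [fourierCoeffOn_eq_integral]
    norm_num
    rw [← intervalIntegral.integral_ofReal (f := g) (μ := volume) (a := 0) (b := 1)]
  have hfinal : |(∫ x in (0:ℝ)..1, g x) - (1/(m:ℝ)) * ∑ i ∈ Finset.range m, g ((i:ℝ)/(m:ℝ))|
      = ‖S/(m:ℂ) - c 0‖ := by
    have hSv : S/(m:ℂ) - c 0
        = ((((∑ i ∈ Finset.range m, g ((i:ℝ)/(m:ℝ)))/(m:ℝ)
            - ∫ x in (0:ℝ)..1, g x) : ℝ) : ℂ) := by
      rw [hc0, hS]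
      push_cast
      ring
    rw [hSv, Complex.norm_real, Real.norm_eq_abs, abs_sub_comm]
    congr 1
    ring
  rw [hfinal]
  calc ‖S/(m:ℂ) - c 0‖ ≤ (M/(m:ℝ)^r) * K := hvnorm
    _ = (M*K)/(m:ℝ)^r := by ring
    _ ≤ (M*K + 1)/(m:ℝ)^r := by gcongr; linarith


lemma elementary_case (g : ℝ → ℝ) (hg : ContDiff ℝ 1 g) :
    ∃ C > 0, ∀ m : ℕ, 1 ≤ m →
      |(∫ x in (0:ℝ)..1, g x) - (1/(m:ℝ)) * ∑ i ∈ Finset.range m, g ((i:ℝ)/(m:ℝ))|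
        ≤ C / (m:ℝ) ^ 1 := by
  have hgc : Continuous g := hg.continuous
  have hdc : Continuous (deriv g) := hg.continuous_deriv le_rfl
  obtain ⟨M, hM⟩ := isCompact_Icc.exists_bound_of_continuousOn
    (hdc.continuousOn (s := Icc (0:ℝ) 1))
  have hM0 : 0 ≤ M := le_trans (norm_nonneg _) (hM 0 ⟨le_rfl, zero_le_one⟩)
  have hLip : ∀ x ∈ Icc (0:ℝ) 1, ∀ y ∈ Icc (0:ℝ) 1, |g y - g x| ≤ M * |y - x| := by
    intro x hx y hy
    have := Convex.norm_image_sub_le_of_norm_deriv_le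
      (f := g) (s := Icc (0:ℝ) 1)
      (fun z _ => hg.differentiable one_ne_zero z)
      (fun z hz => hM z hz) (convex_Icc 0 1) hx hy
    simpa [Real.norm_eq_abs] using this
  refine ⟨M + 1, by positivity, ?_⟩
  intro m hm
  have hmR : (0:ℝ) < m := by exact_mod_cast Nat.pos_of_ne_zero (by omega)
  set a : ℕ → ℝ := fun i => (i:ℝ)/(m:ℝ) with ha
  have haIcc : ∀ i : ℕ, i ≤ m → a i ∈ Icc (0:ℝ) 1 := by
    intro i hi
    constructor
    · positivity
    · rw [div_le_one hmR]; exact_mod_cast hi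
  have hint : ∀ k, k < m → IntervalIntegrable g volume (a k) (a (k+1)) :=
    fun k _ => hgc.intervalIntegrable _ _
  have hsplit : ∫ x in (0:ℝ)..1, g x = ∑ i ∈ Finset.range m, ∫ x in (a i)..(a (i+1)), g x := by
    rw [intervalIntegral.sum_integral_adjacent_intervals hint]
    have h0 : a 0 = 0 := by simp [ha]
    have h1 : a m = 1 := by simp only [ha]; exact div_self hmR.ne'
    rw [h0, h1]
  have hstep : ∀ i : ℕ, a (i+1) - a i = 1/(m:ℝ) := by
    intro i
    simp only [ha]; rw [← sub_div, Nat.cast_succ, add_sub_cancel_left]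
  have hconst : (1/(m:ℝ)) * ∑ i ∈ Finset.range m, g (a i)
      = ∑ i ∈ Finset.range m, ∫ _ in (a i)..(a (i+1)), g (a i) := by
    rw [Finset.mul_sum]
    congr 1
    funext i
    rw [intervalIntegral.integral_const, hstep i, smul_eq_mul]
  have hdiff : (∫ x in (0:ℝ)..1, g x) - (1/(m:ℝ)) * ∑ i ∈ Finset.range m, g (a i)
      = ∑ i ∈ Finset.range m, ∫ x in (a i)..(a (i+1)), (g x - g (a i)) := by
    rw [hsplit, hconst, ← Finset.sum_sub_distrib]
    congr 1
    funext i
    rw [intervalIntegral.integral_sub (hgc.intervalIntegrable _ _)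
      (intervalIntegrable_const)]
  have hbound : ∀ i ∈ Finset.range m,
      |∫ x in (a i)..(a (i+1)), (g x - g (a i))| ≤ (M/(m:ℝ)) * (1/(m:ℝ)) := by
    intro i hi
    have him : i < m := Finset.mem_range.mp hi
    have hle : a i ≤ a (i+1) := by
      have h := hstep i
      have h2 : (0:ℝ) < 1/(m:ℝ) := by positivity
      linarith
    have hI : ∀ x ∈ Set.uIoc (a i) (a (i+1)), |g x - g (a i)| ≤ M/(m:ℝ) := by
      intro x hx
      rw [Set.uIoc_of_le hle] at hx
      have hxI : x ∈ Icc (0:ℝ) 1 := ⟨le_trans (haIcc i him.le).1 hx.1.le,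
        le_trans hx.2 (haIcc (i+1) him).2⟩
      calc |g x - g (a i)| ≤ M * |x - a i| := hLip (a i) (haIcc i him.le) x hxI
        _ ≤ M * (1/(m:ℝ)) := by
            apply mul_le_mul_of_nonneg_left _ hM0
            rw [_root_.abs_of_nonneg (by linarith [hx.1] : (0:ℝ) ≤ x - a i)]
            have := hstep i
            linarith [hx.2]
        _ = M/(m:ℝ) := by ring
    have := intervalIntegral.norm_integral_le_of_norm_le_const (C := M/(m:ℝ))
      (f := fun x => g x - g (a i)) (a := a i) (b := a (i+1)) hI
    rw [Real.norm_eq_abs] at this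
    calc |∫ x in (a i)..(a (i+1)), (g x - g (a i))| ≤ M/(m:ℝ) * |a (i+1) - a i| := this
      _ = (M/(m:ℝ)) * (1/(m:ℝ)) := by rw [hstep i, _root_.abs_of_nonneg (by positivity)]
  calc |(∫ x in (0:ℝ)..1, g x) - (1/(m:ℝ)) * ∑ i ∈ Finset.range m, g (a i)|
      = |∑ i ∈ Finset.range m, ∫ x in (a i)..(a (i+1)), (g x - g (a i))| := by rw [hdiff]
    _ ≤ ∑ i ∈ Finset.range m, |∫ x in (a i)..(a (i+1)), (g x - g (a i))| :=
        Finset.abs_sum_le_sum_abs _ _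
    _ ≤ ∑ _i ∈ Finset.range m, (M/(m:ℝ)) * (1/(m:ℝ)) := Finset.sum_le_sum hbound
    _ = M / (m:ℝ) := by
        rw [Finset.sum_const, Finset.card_range, nsmul_eq_mul]
        field_simp
    _ ≤ (M + 1) / (m:ℝ) ^ 1 := by
        rw [pow_one]
        gcongr
        linarith


/-- for a 1-periodic function `g` of class `C^r` (`r ≥ 1`), the composite
trapezoidal rule error satisfies
`R(m) = ∫₀¹ g(x) dx − (1/m) Σ_{i<m} g(i/m) = O(m^{−r})`: there is `C > 0` such that
`|R(m)| ≤ C m^{−r}` for all `m ≥ 1`. -/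
theorem stmt_19 (r : ℕ) (hr : 1 ≤ r)
    (g : ℝ → ℝ) (hper : Function.Periodic g 1) (hg : ContDiff ℝ r g) :
    ∃ C > 0, ∀ m : ℕ, 1 ≤ m →
      |(∫ x in (0:ℝ)..1, g x) - (1/(m:ℝ)) * ∑ i ∈ Finset.range m, g ((i:ℝ)/(m:ℝ))|
        ≤ C / (m:ℝ) ^ r := by
  rcases eq_or_lt_of_le hr with h1 | h2
  · subst h1
    exact elementary_case g (by exact_mod_cast hg)
  · exact fourier_case r h2 g hper hg
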